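/- arXiv:2510.10440 — 3 statements merged into one kernel-verified Lean document; each statement's English description precedes it below -/
import Mathlib

section
/- For matrices A, W ∈ ℝ^{u×i} and B, C ∈ ℝ^{i×d}, vec((Wᵀ ⊙ (C Bᵀ Aᵀ)) A B) = (AB ⊗ I_i)ᵀ · diag(vec(Wᵀ)) · (AB ⊗ I_i) · vec(C), where I_i is the i×i identity matrix. -/
open Matrix
open scoped Kronecker Matrix

/-- Column-stacking vectorization: `vec M (j, i) = M i j`. -/
def vec {m n : Type*} (M : Matrix m n ℝ) : n × m → ℝ := fun p => M p.2 p.1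

theorem stmt_1 {u i d : Type*} [Fintype u] [Fintype i] [Fintype d]
    [DecidableEq u] [DecidableEq i] [DecidableEq d]
    (A W : Matrix u i ℝ) (B C : Matrix i d ℝ) :
    _root_.vec ((Wᵀ ⊙ (C * Bᵀ * Aᵀ)) * (A * B)) =
      (((A * B) ⊗ₖ (1 : Matrix i i ℝ))ᵀ * diagonal (_root_.vec Wᵀ) *
        ((A * B) ⊗ₖ (1 : Matrix i i ℝ))).mulVec (_root_.vec C) := by
  funext p
  obtain ⟨j, k⟩ := p
  simp only [_root_.vec, mulVec, dotProduct, mul_apply, hadamard_apply, transpose_apply,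
    diagonal_apply, kroneckerMap_apply, one_apply, Fintype.sum_prod_type, Prod.mk.injEq,
    ite_and, mul_one]
  simp only [Finset.sum_ite_eq, Finset.sum_ite_eq', Finset.mem_univ, if_true, mul_ite, ite_mul,
    mul_zero, zero_mul, Finset.sum_ite_irrel, Finset.sum_const_zero]
  simp only [Finset.sum_mul, Finset.mul_sum, mul_one]
  conv_rhs => rw [Finset.sum_comm]
  refine Finset.sum_congr rfl fun a _ => ?_
  conv_lhs => rw [Finset.sum_comm]
  conv_rhs => rw [Finset.sum_comm]
  refine Finset.sum_congr rfl fun b _ => ?_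
  conv_lhs => rw [Finset.sum_comm]
  refine Finset.sum_congr rfl fun c _ => ?_
  refine Finset.sum_congr rfl fun e _ => ?_
  ring
end

section
/- Let A ∈ ℝ^{n×n} be symmetric positive definite with condition number κ(A) = λ_max(A)/λ_min(A), b ∈ ℝ^n, and x = A⁻¹b. The iterates x_k of the conjugate gradient method started at x₀ satisfy ‖x_k − x‖_A ≤ 2((√κ − 1)/(√κ + 1))^k ‖x₀ − x‖_A, where ‖v‖_A = √(vᵀAv). -/
open Polynomial Polynomial.Chebyshev

lemma chebT_half (z : ℝ) (hz : z ≠ 0) :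
    ∀ k : ℕ, (T ℝ (k:ℤ)).eval ((z + z⁻¹)/2) = (z^k + z⁻¹^k)/2 := by
  intro k
  induction k using Nat.twoStepInduction with
  | zero => simp
  | one => simp
  | more k ih2 ih1 =>
    rw [show ((k + 2 : ℕ) : ℤ) = (k:ℤ) + 2 by push_cast; ring, T_add_two,
      show (k:ℤ) + 1 = ((k+1 : ℕ) : ℤ) by push_cast; ring]
    simp only [eval_sub, eval_mul, eval_X, eval_ofNat, ih1, ih2]
    have hz' : z⁻¹ ≠ 0 := inv_ne_zero hz
    field_simp
    have hzz : z * z⁻¹ = 1 := mul_inv_cancel₀ hz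
    linear_combination (z * z⁻¹ ^ k - z⁻¹ * z⁻¹ ^ k) * hzz


lemma chebT_abs_le (k : ℤ) (t : ℝ) (ht : t ∈ Set.Icc (-1:ℝ) 1) :
    |(Polynomial.Chebyshev.T ℝ k).eval t| ≤ 1 := by
  have hco : t = Real.cos (Real.arccos t) := (Real.cos_arccos ht.1 ht.2).symm
  rw [hco, Polynomial.Chebyshev.T_real_cos]
  exact Real.abs_cos_le_one _

lemma chebT_natDegree_le : ∀ k : ℕ, (T ℝ (k:ℤ)).natDegree ≤ k := by
  intro k
  induction k using Nat.twoStepInduction with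
  | zero => simp
  | one => simp [T_one]
  | more k ih2 ih1 =>
    rw [show ((k + 2 : ℕ) : ℤ) = (k:ℤ) + 2 by push_cast; ring, T_add_two,
      show (k:ℤ) + 1 = ((k+1 : ℕ) : ℤ) by push_cast; ring]
    refine le_trans (natDegree_sub_le _ _) (max_le ?_ (by omega))
    refine le_trans natDegree_mul_le ?_
    have h2 : ((2 : ℝ[X]) * X).natDegree ≤ 1 := le_trans natDegree_mul_le (by simp)
    omega

open Matrix
open Matrix Polynomial

section Spec
variable {n : Type*} [Fintype n] [DecidableEq n]
variable {A : Matrix n n ℝ} (hA : A.IsHermitian)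

/-- coordinates of a vector in the eigenbasis -/
noncomputable def cco (v : n → ℝ) (i : n) : ℝ := ⇑(hA.eigenvectorBasis i) ⬝ᵥ v

lemma star_eigU_mulVec (v : n → ℝ) :
    (star (hA.eigenvectorUnitary : Matrix n n ℝ)) *ᵥ v = cco hA v := by
  funext i
  simp [Matrix.mulVec, Matrix.star_apply, cco, dotProduct, Matrix.conjTranspose_apply]


lemma sum_smul_mulVec (N : ℕ) (c : ℕ → ℝ) (v : n → ℝ) :
    (∑ m ∈ Finset.range N, c m • A ^ m) *ᵥ v =
      ∑ m ∈ Finset.range N, c m • ((A ^ m) *ᵥ v) := by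
  funext j
  simp only [Matrix.mulVec, dotProduct, Finset.sum_apply, Matrix.sum_apply, Pi.smul_apply,
    Matrix.smul_apply, smul_eq_mul, Finset.sum_mul]
  rw [Finset.sum_comm]
  refine Finset.sum_congr rfl fun m _ => ?_
  rw [Finset.mul_sum]
  exact Finset.sum_congr rfl fun l _ => by ring

lemma quad_eq_sum (v : n → ℝ) :
    v ⬝ᵥ A *ᵥ v = ∑ i, hA.eigenvalues i * (cco hA v i)^2 := by
  conv_lhs => rw [hA.spectral_theorem, Unitary.conjStarAlgAut_apply]
  rw [← mulVec_mulVec, ← mulVec_mulVec, dotProduct_mulVec v, star_eigU_mulVec hA v]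
  have hvm : vecMul v (hA.eigenvectorUnitary : Matrix n n ℝ) = cco hA v := by
    funext i
    simp [Matrix.vecMul, cco, dotProduct, mul_comm]
  rw [hvm]
  have : (Matrix.diagonal (RCLike.ofReal ∘ hA.eigenvalues)) *ᵥ (cco hA v) =
      fun i => hA.eigenvalues i * cco hA v i := by
    funext i; simp [Matrix.diagonal_mulVec_single, Matrix.mulVec_diagonal]
  rw [this, dotProduct]
  congr 1; funext i; ring

lemma cco_mulVec (v : n → ℝ) (i : n) :
    cco hA (A *ᵥ v) i = hA.eigenvalues i * cco hA v i := by
  unfold cco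
  rw [dotProduct_mulVec]
  have hsym : Aᵀ = A := by
    rw [← Matrix.conjTranspose_eq_transpose_of_trivial, hA]
  have hentry : ∀ a c, A a c = A c a := fun a c => congrFun (congrFun hsym c) a
  have hvm : (⇑(hA.eigenvectorBasis i)) ᵥ* A = A *ᵥ ⇑(hA.eigenvectorBasis i) := by
    funext j
    simp only [Matrix.vecMul, Matrix.mulVec, dotProduct]
    exact Finset.sum_congr rfl fun l _ => by rw [hentry j l]; ring
  rw [hvm, hA.mulVec_eigenvectorBasis]
  simp [dotProduct, Finset.mul_sum, mul_assoc]

lemma cco_add (v w : n → ℝ) : cco hA (v + w) = cco hA v + cco hA w := by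
  funext i; simp [cco, dotProduct_add]

lemma cco_smul (c : ℝ) (v : n → ℝ) : cco hA (c • v) = c • cco hA v := by
  funext i; simp [cco]

lemma cco_pow_mulVec (m : ℕ) (v : n → ℝ) (i : n) :
    cco hA ((A ^ m) *ᵥ v) i = hA.eigenvalues i ^ m * cco hA v i := by
  induction m with
  | zero => simp
  | succ m ih =>
    rw [pow_succ', ← mulVec_mulVec, cco_mulVec, ih]
    ring

lemma cco_aeval (P : ℝ[X]) (v : n → ℝ) (i : n) :
    cco hA ((Polynomial.aeval A P) *ᵥ v) i = P.eval (hA.eigenvalues i) * cco hA v i := by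
  rw [Polynomial.aeval_eq_sum_range, Polynomial.eval_eq_sum_range]
  have hsm : (∑ m ∈ Finset.range (P.natDegree + 1), P.coeff m • A ^ m) *ᵥ v =
      ∑ m ∈ Finset.range (P.natDegree + 1), P.coeff m • ((A ^ m) *ᵥ v) := by
    funext j
    simp only [Matrix.mulVec, dotProduct, Finset.sum_apply, Matrix.sum_apply, Pi.smul_apply,
      Matrix.smul_apply, smul_eq_mul, Finset.sum_mul]
    rw [Finset.sum_comm]
    refine Finset.sum_congr rfl fun m _ => ?_
    rw [Finset.mul_sum]
    exact Finset.sum_congr rfl fun l _ => by ring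
  rw [hsm]
  unfold cco
  have hds : (⇑(hA.eigenvectorBasis i)) ⬝ᵥ (∑ m ∈ Finset.range (P.natDegree + 1),
      P.coeff m • ((A ^ m) *ᵥ v)) = ∑ m ∈ Finset.range (P.natDegree + 1),
      (⇑(hA.eigenvectorBasis i)) ⬝ᵥ (P.coeff m • ((A ^ m) *ᵥ v)) := by
    simp only [dotProduct, Finset.sum_apply, Finset.mul_sum]
    exact Finset.sum_comm
  rw [hds, Finset.sum_mul]
  refine Finset.sum_congr rfl fun m hm => ?_
  have hc := cco_pow_mulVec hA m v i
  unfold cco at hc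
  rw [dotProduct_smul, smul_eq_mul, hc]
  ring
open Matrix

end Spec

section CG
variable {n : Type*} [Fintype n] [DecidableEq n]
variable {A : Matrix n n ℝ}

lemma symmdot (hA : A.IsHermitian) (y z : n → ℝ) :
    (A *ᵥ y) ⬝ᵥ z = y ⬝ᵥ (A *ᵥ z) := by
  have hsym : Aᵀ = A := by rw [← Matrix.conjTranspose_eq_transpose_of_trivial, hA]
  have hentry : ∀ a c, A a c = A c a := fun a c => congrFun (congrFun hsym c) a
  rw [dotProduct_mulVec]
  congr 1
  funext j
  simp only [Matrix.vecMul, Matrix.mulVec, dotProduct]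
  exact Finset.sum_congr rfl fun l _ => by rw [hentry j l]; ring

variable (hA : A.PosDef) {b : n → ℝ}
  {xstar : n → ℝ} (hxstar : A *ᵥ xstar = b)
  {x r p : ℕ → n → ℝ} {alpha beta : ℕ → ℝ}
  (hr : ∀ k, r k = b - A *ᵥ (x k))
  (hp0 : p 0 = r 0)
  (halpha : ∀ k, alpha k = (r k ⬝ᵥ r k) / (p k ⬝ᵥ A *ᵥ (p k)))
  (hx : ∀ k, x (k + 1) = x k + alpha k • p k)
  (hbeta : ∀ k, beta k = (r (k + 1) ⬝ᵥ r (k + 1)) / (r k ⬝ᵥ r k))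
  (hp : ∀ k, p (k + 1) = r (k + 1) + beta k • p k)

include hr hx in
lemma rrec : ∀ k, r (k+1) = r k - alpha k • (A *ᵥ p k) := by
  intro k
  rw [hr, hx, hr, Matrix.mulVec_add, Matrix.mulVec_smul]
  funext j; simp; ring

include hr hx hp0 hbeta hp in
lemma rzero_succ : ∀ k, r k = 0 → r (k+1) = 0 := by
  intro k hk
  have hpk : p k = 0 := by
    cases k with
    | zero => rw [hp0, hk]
    | succ m =>
      have hb : beta m = 0 := by rw [hbeta, hk]; simp
      rw [hp, hk, hb]; simp
  rw [rrec hr hx, hk, hpk]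
  simp

include hr hx hp0 hbeta hp in
lemma rzero_ge {m : ℕ} (hm : r m = 0) : ∀ k, m ≤ k → r k = 0 := by
  intro k hk
  induction k with
  | zero => exact Nat.le_zero.mp hk ▸ hm
  | succ j ih =>
    rcases Nat.lt_or_ge m (j+1) with h | h
    · exact rzero_succ hr hp0 hx hbeta hp j (ih (by omega))
    · have : m = j + 1 := by omega
      exact this ▸ hm

include hr hxstar in
lemma errA : ∀ k, A *ᵥ (x k - xstar) = -(r k) := by
  intro k
  rw [hr, Matrix.mulVec_sub, hxstar]
  funext j; simp

include hA hr hp0 halpha hx hbeta hp in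
lemma cg_inv (K : ℕ) (hnz : ∀ j, j < K → r j ≠ 0) :
    ∀ k, k ≤ K → (∀ i, i < k → r k ⬝ᵥ p i = 0) ∧ (∀ i, i < k → r k ⬝ᵥ r i = 0) ∧
      (∀ i, i < k → p k ⬝ᵥ (A *ᵥ p i) = 0) ∧
      (∀ i, i < k → alpha i ≠ 0 ∧ alpha i * (p i ⬝ᵥ (A *ᵥ p i)) = r i ⬝ᵥ r i) := by
  intro k
  induction k with
  | zero => exact fun _ => ⟨fun i hi => absurd hi (by omega), fun i hi => absurd hi (by omega),
      fun i hi => absurd hi (by omega), fun i hi => absurd hi (by omega)⟩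
  | succ k ih =>
    intro hk1
    have hkK : k < K := by omega
    obtain ⟨ih1, ih2, ih3, ih4⟩ := ih (le_of_lt hkK)
    have hrk : r k ≠ 0 := hnz k hkK
    have hrr : r k ⬝ᵥ r k ≠ 0 := fun h => hrk (dotProduct_self_eq_zero.mp h)
    have hrp : r k ⬝ᵥ p k = r k ⬝ᵥ r k := by
      cases k with
      | zero => rw [hp0]
      | succ m =>
        rw [hp m, dotProduct_add, dotProduct_smul, ih1 m (lt_add_one m), smul_zero, add_zero]
    have hpk0 : p k ≠ 0 := by
      intro h
      exact hrr (by rw [← hrp, h, dotProduct_zero])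
    have hpAp : 0 < p k ⬝ᵥ (A *ᵥ p k) := by
      have := hA.dotProduct_mulVec_pos hpk0
      simpa using this
    have hα : alpha k * (p k ⬝ᵥ (A *ᵥ p k)) = r k ⬝ᵥ r k := by
      rw [halpha]; field_simp
    have hαne : alpha k ≠ 0 := by
      intro h
      rw [h, zero_mul] at hα
      exact hrr hα.symm
    have ih4' : ∀ i, i < k + 1 → alpha i ≠ 0 ∧ alpha i * (p i ⬝ᵥ (A *ᵥ p i)) = r i ⬝ᵥ r i := by
      intro i hi
      rcases Nat.lt_or_ge i k with h | h
      · exact ih4 i h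
      · have : i = k := by omega
        subst this; exact ⟨hαne, hα⟩
    -- (a)
    have ha : ∀ i, i < k + 1 → r (k+1) ⬝ᵥ p i = 0 := by
      intro i hi
      rw [rrec hr hx, sub_dotProduct, smul_dotProduct, symmdot hA.1]
      rcases Nat.lt_or_ge i k with h | h
      · rw [ih1 i h, ih3 i h, smul_zero, sub_zero]
      · have hik : i = k := by omega
        subst hik
        rw [hrp, smul_eq_mul, hα, sub_self]
    -- (b)
    have hb : ∀ i, i < k + 1 → r (k+1) ⬝ᵥ r i = 0 := by
      intro i hi
      cases i with
      | zero => rw [← hp0]; exact ha 0 hi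
      | succ m =>
        have hrm : r (m+1) = p (m+1) - beta m • p m := by
          rw [hp m]; funext j; simp
        rw [hrm, dotProduct_sub, dotProduct_smul, ha (m+1) hi, ha m (by omega), smul_zero,
          sub_zero]
    -- (c)
    have hc : ∀ i, i < k + 1 → p (k+1) ⬝ᵥ (A *ᵥ p i) = 0 := by
      intro i hi
      obtain ⟨hαi, hαieq⟩ := ih4' i hi
      have hApi : A *ᵥ p i = (alpha i)⁻¹ • (r i - r (i+1)) := by
        have h2 : alpha i • (A *ᵥ p i) = r i - r (i+1) := by
          rw [rrec hr hx i]; funext j; simp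
        rw [← h2, smul_smul, inv_mul_cancel₀ hαi, one_smul]
      have hterm1 : r (k+1) ⬝ᵥ (A *ᵥ p i) =
          (alpha i)⁻¹ * ((r (k+1) ⬝ᵥ r i) - (r (k+1) ⬝ᵥ r (i+1))) := by
        rw [hApi, dotProduct_smul, dotProduct_sub, smul_eq_mul]
      have hgoal : p (k+1) ⬝ᵥ (A *ᵥ p i) =
          r (k+1) ⬝ᵥ (A *ᵥ p i) + beta k * (p k ⬝ᵥ (A *ᵥ p i)) := by
        rw [hp k, add_dotProduct, smul_dotProduct, smul_eq_mul]
      rw [hgoal, hterm1]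
      rcases Nat.lt_or_ge i k with h | h
      · rw [hb i (by omega), hb (i+1) (by omega), ih3 i h]
        ring
      · have hik : i = k := by omega
        subst hik
        have hpApeq : p i ⬝ᵥ (A *ᵥ p i) = (alpha i)⁻¹ * (r i ⬝ᵥ r i) := by
          rw [← hα]
          field_simp
        have h2 : beta i * (p i ⬝ᵥ (A *ᵥ p i)) = (r (i+1) ⬝ᵥ r (i+1)) * (alpha i)⁻¹ := by
          rw [hbeta, hpApeq]
          field_simp
        rw [hb i (lt_add_one i), h2]
        ring
    exact ⟨ha, hb, hc, ih4'⟩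


/-- span of the first k search directions -/
def Pspan (p : ℕ → n → ℝ) (k : ℕ) : Submodule ℝ (n → ℝ) :=
  Submodule.span ℝ {v | ∃ i < k, v = p i}

lemma Pspan_mono {p : ℕ → n → ℝ} {k l : ℕ} (h : k ≤ l) : Pspan p k ≤ Pspan p l :=
  Submodule.span_mono (fun v ⟨i, hi, hv⟩ => ⟨i, by omega, hv⟩)

lemma p_mem_Pspan {p : ℕ → n → ℝ} {i k : ℕ} (h : i < k) : p i ∈ Pspan p k :=
  Submodule.subset_span ⟨i, h, rfl⟩

include hp0 hp in
lemma r_mem_Pspan : ∀ i, r i ∈ Pspan p (i+1) := by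
  intro i
  cases i with
  | zero => rw [← hp0]; exact p_mem_Pspan (by omega)
  | succ m =>
    have : r (m+1) = p (m+1) - beta m • p m := by rw [hp m]; funext j; simp
    rw [this]
    exact sub_mem (p_mem_Pspan (by omega)) (Submodule.smul_mem _ _ (p_mem_Pspan (by omega)))

include hA hr hp0 halpha hx hbeta hp in
lemma krylov_mem (K : ℕ) (hnz : ∀ j, j < K → r j ≠ 0) :
    ∀ j, j ≤ K → (A ^ j) *ᵥ (r 0) ∈ Pspan p (j+1) := by
  intro j
  induction j with
  | zero =>
    intro _
    rw [pow_zero, Matrix.one_mulVec]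
    exact r_mem_Pspan hp0 hp 0
  | succ j ihj =>
    intro hj1
    have hmem := ihj (by omega)
    have hstep : ∀ v ∈ Pspan p (j+1), A *ᵥ v ∈ Pspan p (j+2) := by
      intro v hv
      induction hv using Submodule.span_induction with
      | mem w hw =>
        obtain ⟨i, hi, rfl⟩ := hw
        obtain ⟨hαi, -⟩ := (cg_inv hA hr hp0 halpha hx hbeta hp K hnz (j+1) (by omega)).2.2.2
          i hi
        have hApi : A *ᵥ p i = (alpha i)⁻¹ • (r i - r (i+1)) := by
          have h2 : alpha i • (A *ᵥ p i) = r i - r (i+1) := by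
            rw [rrec hr hx i]; funext l; simp
          rw [← h2, smul_smul, inv_mul_cancel₀ hαi, one_smul]
        rw [hApi]
        refine Submodule.smul_mem _ _ (sub_mem ?_ ?_)
        · exact Pspan_mono (by omega) (r_mem_Pspan hp0 hp i)
        · exact Pspan_mono (by omega) (r_mem_Pspan hp0 hp (i+1))
      | zero => rw [Matrix.mulVec_zero]; exact zero_mem _
      | add u w _ _ hu hw => rw [Matrix.mulVec_add]; exact add_mem hu hw
      | smul c u _ hu => rw [Matrix.mulVec_smul]; exact Submodule.smul_mem _ _ hu
    have : (A ^ (j+1)) *ᵥ (r 0) = A *ᵥ ((A ^ j) *ᵥ (r 0)) := by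
      rw [pow_succ', ← Matrix.mulVec_mulVec]
    rw [this]
    exact hstep _ hmem

include hx in
lemma xdiff : ∀ k, x k = x 0 + ∑ i ∈ Finset.range k, alpha i • p i := by
  intro k
  induction k with
  | zero => simp
  | succ k ih =>
    rw [hx k, ih, Finset.sum_range_succ]
    funext j; simp; ring

include hA hxstar hr hp0 halpha hx hbeta hp in
lemma cg_optimal (K : ℕ) (hnz : ∀ j, j < K → r j ≠ 0) (z : n → ℝ) (hz : z ∈ Pspan p K) :
    (x K - xstar) ⬝ᵥ (A *ᵥ (x K - xstar)) ≤
      (x 0 - xstar - z) ⬝ᵥ (A *ᵥ (x 0 - xstar - z)) := by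
  set eK := x K - xstar with heK
  set w := (x 0 - xstar - z) - eK with hw
  have hwmem : w ∈ Pspan p K := by
    have hsum : x 0 - x K = -∑ i ∈ Finset.range K, alpha i • p i := by
      rw [xdiff hx K]; funext j; simp
    have : w = (x 0 - x K) - z := by rw [hw, heK]; funext j; simp; ring
    rw [this, hsum]
    refine sub_mem (neg_mem (Submodule.sum_mem _ fun i hi => ?_)) hz
    exact Submodule.smul_mem _ _ (p_mem_Pspan (Finset.mem_range.mp hi))
  have horthAll : ∀ v ∈ Pspan p K, r K ⬝ᵥ v = 0 := by
    have hra := (cg_inv hA hr hp0 halpha hx hbeta hp K hnz K le_rfl).1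
    intro v hv
    induction hv using Submodule.span_induction with
    | mem v hv => obtain ⟨i, hi, rfl⟩ := hv; exact hra i hi
    | zero => exact dotProduct_zero _
    | add u v _ _ hu hv => rw [dotProduct_add, hu, hv, add_zero]
    | smul c u _ hu => rw [dotProduct_smul, hu, smul_zero]
  have horth : r K ⬝ᵥ w = 0 := horthAll w hwmem
  have hsplit : x 0 - xstar - z = eK + w := by rw [hw]; funext j; simp
  rw [hsplit]
  have hexp : (eK + w) ⬝ᵥ (A *ᵥ (eK + w)) =
      eK ⬝ᵥ (A *ᵥ eK) + 2 * (w ⬝ᵥ (A *ᵥ eK)) + w ⬝ᵥ (A *ᵥ w) := by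
    simp only [Matrix.mulVec_add, add_dotProduct, dotProduct_add]
    have hsymw : eK ⬝ᵥ (A *ᵥ w) = w ⬝ᵥ (A *ᵥ eK) := by
      rw [← symmdot hA.1, dotProduct_comm]
    rw [hsymw]; ring
  rw [hexp]
  have hwAe : w ⬝ᵥ (A *ᵥ eK) = 0 := by
    rw [heK, errA hxstar hr K]
    rw [dotProduct_neg, dotProduct_comm, horth, neg_zero]
  have hwAw : 0 ≤ w ⬝ᵥ (A *ᵥ w) := by
    have := hA.posSemidef.dotProduct_mulVec_nonneg w
    simpa using this
  rw [hwAe]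
  linarith

end CG
open Polynomial in
set_option maxHeartbeats 1000000 in
theorem stmt_15 {n : Type*} [Fintype n] [DecidableEq n] [Nonempty n]
    (A : Matrix n n ℝ) (hA : A.PosDef) (b : n → ℝ)
    (lamMax lamMin kappa : ℝ)
    (hmax : IsGreatest (Set.range hA.1.eigenvalues) lamMax)
    (hmin : IsLeast (Set.range hA.1.eigenvalues) lamMin)
    (hkappa : kappa = lamMax / lamMin)
    (xstar : n → ℝ) (hxstar : A.mulVec xstar = b)
    (x r p : ℕ → n → ℝ) (alpha beta : ℕ → ℝ)
    (hr : ∀ k, r k = b - A.mulVec (x k))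
    (hp0 : p 0 = r 0)
    (halpha : ∀ k, alpha k = (r k ⬝ᵥ r k) / (p k ⬝ᵥ A.mulVec (p k)))
    (hx : ∀ k, x (k + 1) = x k + alpha k • p k)
    (hbeta : ∀ k, beta k = (r (k + 1) ⬝ᵥ r (k + 1)) / (r k ⬝ᵥ r k))
    (hp : ∀ k, p (k + 1) = r (k + 1) + beta k • p k) :
    ∀ k : ℕ,
      Real.sqrt ((x k - xstar) ⬝ᵥ A.mulVec (x k - xstar)) ≤
        2 * ((Real.sqrt kappa - 1) / (Real.sqrt kappa + 1)) ^ k *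
          Real.sqrt ((x 0 - xstar) ⬝ᵥ A.mulVec (x 0 - xstar)) := by
  intro k
  have hevpos : ∀ i, 0 < hA.1.eigenvalues i := hA.eigenvalues_pos
  have hminpos : 0 < lamMin := by
    obtain ⟨i, hi⟩ := hmin.1
    rw [← hi]; exact hevpos i
  have hminle : ∀ i, lamMin ≤ hA.1.eigenvalues i := fun i => hmin.2 ⟨i, rfl⟩
  have hmaxge : ∀ i, hA.1.eigenvalues i ≤ lamMax := fun i => hmax.2 ⟨i, rfl⟩
  have hlml : lamMin ≤ lamMax := by
    obtain ⟨i, hi⟩ := hmin.1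
    rw [← hi]; exact hmaxge i
  have hκ1 : 1 ≤ kappa := by
    rw [hkappa, le_div_iff₀ hminpos]; linarith
  have hs1 : 1 ≤ Real.sqrt kappa := by
    rw [show (1:ℝ) = Real.sqrt 1 by rw [Real.sqrt_one]]
    exact Real.sqrt_le_sqrt hκ1
  have hρ0 : 0 ≤ (Real.sqrt kappa - 1) / (Real.sqrt kappa + 1) :=
    div_nonneg (by linarith) (by linarith)
  have hq00 : 0 ≤ (x 0 - xstar) ⬝ᵥ A.mulVec (x 0 - xstar) := by
    have := hA.posSemidef.dotProduct_mulVec_nonneg (x 0 - xstar); simpa using this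
  rcases Nat.eq_zero_or_pos k with hk0 | hk1
  · subst hk0
    simp only [pow_zero, mul_one]
    have := Real.sqrt_nonneg ((x 0 - xstar) ⬝ᵥ A.mulVec (x 0 - xstar))
    linarith
  have hfin : r k = 0 →
      Real.sqrt ((x k - xstar) ⬝ᵥ A.mulVec (x k - xstar)) ≤
        2 * ((Real.sqrt kappa - 1) / (Real.sqrt kappa + 1)) ^ k *
          Real.sqrt ((x 0 - xstar) ⬝ᵥ A.mulVec (x 0 - xstar)) := by
    intro h0
    have hAe : A.mulVec (x k - xstar) = 0 := by rw [errA hxstar hr k, h0]; simp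
    rw [show (x k - xstar) ⬝ᵥ A.mulVec (x k - xstar) = 0 by rw [hAe, dotProduct_zero]]
    rw [Real.sqrt_zero]
    positivity
  by_cases hnz : ∀ j, j < k → r j ≠ 0
  swap
  · push_neg at hnz
    obtain ⟨j, hj, hj0⟩ := hnz
    exact hfin (rzero_ge hr hp0 hx hbeta hp hj0 k (by omega))
  by_cases hκeq : kappa = 1
  · -- all eigenvalues equal; CG converges in one step
    have hmaxmin : lamMax = lamMin := by
      rw [hkappa] at hκeq
      field_simp at hκeq
      linarith
    have hAid : A = lamMin • (1 : Matrix n n ℝ) := by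
      conv_lhs => rw [hA.1.spectral_theorem]
      have hdiag : Matrix.diagonal (RCLike.ofReal ∘ hA.1.eigenvalues) =
          lamMin • (1 : Matrix n n ℝ) := by
        ext i j
        by_cases hij : i = j
        · subst hij
          have hμi : hA.1.eigenvalues i = lamMin :=
            le_antisymm (hmaxmin ▸ hmaxge i) (hminle i)
          simp [Matrix.diagonal_apply_eq, hμi, Matrix.one_apply]
        · simp [Matrix.diagonal_apply_ne _ hij, Matrix.one_apply, hij]
      rw [hdiag, Unitary.conjStarAlgAut_apply, Matrix.mul_smul, Matrix.mul_one, Matrix.smul_mul,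
        Matrix.mem_unitaryGroup_iff.mp hA.1.eigenvectorUnitary.2]
    have hAv : ∀ v : n → ℝ, A.mulVec v = lamMin • v := by
      intro v; rw [hAid, Matrix.smul_mulVec, Matrix.one_mulVec]
    have hr0 : r 0 ≠ 0 := hnz 0 hk1
    have hrr0 : r 0 ⬝ᵥ r 0 ≠ 0 := fun h => hr0 (dotProduct_self_eq_zero.mp h)
    have hα0 : alpha 0 = lamMin⁻¹ := by
      rw [halpha 0, hp0, hAv, dotProduct_smul, smul_eq_mul]
      rw [div_mul_eq_div_div_swap]
      rw [div_self hrr0]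
      rw [one_div]
    have he0 : x 0 - xstar = -(lamMin⁻¹ • r 0) := by
      have h1 : A.mulVec (x 0 - xstar) = -(r 0) := errA hxstar hr 0
      rw [hAv] at h1
      funext j
      have h2 := congrFun h1 j
      simp only [Pi.smul_apply, Pi.neg_apply, Pi.sub_apply, smul_eq_mul] at h2 ⊢
      field_simp
      linarith
    have he1 : x 1 - xstar = 0 := by
      rw [hx 0, hp0, hα0]
      funext j
      have h2 := congrFun he0 j
      simp only [Pi.sub_apply, Pi.neg_apply, Pi.add_apply, Pi.zero_apply, Pi.smul_apply,
        smul_eq_mul] at h2 ⊢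
      linarith
    have hr1 : r 1 = 0 := by
      have h3 : A.mulVec (x 1 - xstar) = 0 := by rw [he1, Matrix.mulVec_zero]
      rw [Matrix.mulVec_sub, hxstar] at h3
      rw [hr 1]
      funext j
      have h4 := congrFun h3 j
      simp only [Pi.sub_apply, Pi.zero_apply] at h4 ⊢
      linarith
    exact hfin (rzero_ge hr hp0 hx hbeta hp hr1 k hk1)
  -- main case
  have hκgt : 1 < kappa := lt_of_le_of_ne hκ1 (Ne.symm hκeq)
  have hs : 1 < Real.sqrt kappa := by
    have := Real.sqrt_lt_sqrt (by norm_num) hκgt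
    rwa [Real.sqrt_one] at this
  set s := Real.sqrt kappa with hsdef
  have hs2 : s ^ 2 = kappa := Real.sq_sqrt (by linarith)
  have hlt : lamMin < lamMax := by
    rw [hkappa, lt_div_iff₀ hminpos] at hκgt; linarith
  have hd : 0 < lamMax - lamMin := by linarith
  set z0 := (s + 1) / (s - 1) with hz0def
  have hz0gt : 1 < z0 := by rw [hz0def, lt_div_iff₀ (by linarith)]; linarith
  have hz0pos : 0 < z0 := by linarith
  have hz0ne : z0 ≠ 0 := ne_of_gt hz0pos
  have hρinv : (s - 1) / (s + 1) = z0⁻¹ := by rw [hz0def, inv_div]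
  set σ := (lamMax + lamMin) / (lamMax - lamMin) with hσdef
  have hkey : σ = (z0 + z0⁻¹) / 2 := by
    have hsm : s - 1 ≠ 0 := by intro h; nlinarith
    have hsp : s + 1 ≠ 0 := by intro h; nlinarith
    have hs21 : s^2 - 1 ≠ 0 := by intro h; nlinarith
    have h1 : (z0 + z0⁻¹)/2 = (s^2 + 1)/(s^2 - 1) := by
      rw [hz0def, inv_div]
      field_simp
      ring
    have hκm1 : kappa - 1 ≠ 0 := by intro h; nlinarith
    have hκm1' : lamMax/lamMin - 1 ≠ 0 := by rw [← hkappa]; exact hκm1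
    have h2 : (kappa + 1)/(kappa - 1) = (lamMax + lamMin)/(lamMax - lamMin) := by
      rw [hkappa]
      rw [div_eq_div_iff (by rw [← hkappa]; intro h; nlinarith : lamMax/lamMin - 1 ≠ 0)
        (ne_of_gt hd)]
      field_simp
    calc σ = (lamMax + lamMin)/(lamMax - lamMin) := hσdef
      _ = (kappa + 1)/(kappa - 1) := h2.symm
      _ = (s^2 + 1)/(s^2 - 1) := by rw [hs2]
      _ = (z0 + z0⁻¹)/2 := h1.symm
  have hTσ : (Polynomial.Chebyshev.T ℝ (k:ℤ)).eval σ = (z0^k + z0⁻¹^k)/2 := by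
    rw [hkey]; exact chebT_half z0 hz0ne k
  have hz0k : 0 < z0^k := pow_pos hz0pos k
  have hz0ik : 0 < z0⁻¹^k := pow_pos (by positivity) k
  have hTσpos : 0 < (Polynomial.Chebyshev.T ℝ (k:ℤ)).eval σ := by rw [hTσ]; positivity
  have hTσne : (Polynomial.Chebyshev.T ℝ (k:ℤ)).eval σ ≠ 0 := ne_of_gt hTσpos
  have hTinv : ((Polynomial.Chebyshev.T ℝ (k:ℤ)).eval σ)⁻¹ ≤ 2 * z0⁻¹^k := by
    have h1 : z0^k / 2 ≤ (Polynomial.Chebyshev.T ℝ (k:ℤ)).eval σ := by rw [hTσ]; linarith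
    have h3 : ((Polynomial.Chebyshev.T ℝ (k:ℤ)).eval σ)⁻¹ ≤ (z0^k/2)⁻¹ :=
      inv_anti₀ (by positivity) h1
    refine h3.trans (le_of_eq ?_)
    rw [inv_div, inv_pow]
    rw [div_eq_mul_inv]
  set Tσ := (Polynomial.Chebyshev.T ℝ (k:ℤ)).eval σ with hTσdef
  set P := Polynomial.C Tσ⁻¹ *
    ((Polynomial.Chebyshev.T ℝ (k:ℤ)).comp
      (Polynomial.C σ - Polynomial.C (2/(lamMax - lamMin)) * Polynomial.X)) with hPdef
  have hPeval : ∀ t, P.eval t =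
      Tσ⁻¹ * (Polynomial.Chebyshev.T ℝ (k:ℤ)).eval (σ - 2/(lamMax - lamMin) * t) := by
    intro t
    rw [hPdef]
    simp [Polynomial.eval_comp]
  have hP0 : P.eval 0 = 1 := by
    rw [hPeval, mul_zero, sub_zero, inv_mul_cancel₀ hTσne]
  set M := 2 * ((s - 1)/(s + 1))^k with hMdef
  have hM0 : 0 ≤ M := by rw [hMdef]; positivity
  have hMz : M = 2 * z0⁻¹^k := by rw [hMdef, hρinv]
  have hPbound : ∀ i : n, |P.eval (hA.1.eigenvalues i)| ≤ M := by
    intro i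
    rw [hPeval]
    have ht1 : σ - 2/(lamMax - lamMin) * hA.1.eigenvalues i =
        (lamMax + lamMin - 2 * hA.1.eigenvalues i)/(lamMax - lamMin) := by
      rw [hσdef]; field_simp
    have hmem : σ - 2/(lamMax - lamMin) * hA.1.eigenvalues i ∈ Set.Icc (-1:ℝ) 1 := by
      rw [ht1]
      constructor
      · rw [le_div_iff₀ hd]; have := hmaxge i; linarith
      · rw [div_le_one hd]; have := hminle i; linarith
    have h2 : |(Polynomial.Chebyshev.T ℝ (k:ℤ)).eval
        (σ - 2/(lamMax - lamMin) * hA.1.eigenvalues i)| ≤ 1 := chebT_abs_le _ _ hmem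
    rw [abs_mul, abs_of_pos (inv_pos.mpr hTσpos)]
    calc Tσ⁻¹ * |(Polynomial.Chebyshev.T ℝ (k:ℤ)).eval
          (σ - 2/(lamMax - lamMin) * hA.1.eigenvalues i)|
        ≤ Tσ⁻¹ * 1 := mul_le_mul_of_nonneg_left h2 (le_of_lt (inv_pos.mpr hTσpos))
      _ = Tσ⁻¹ := mul_one _
      _ ≤ M := hMz ▸ hTinv
  have hPdeg : P.natDegree ≤ k := by
    rw [hPdef]
    refine le_trans (Polynomial.natDegree_mul_le) ?_
    rw [Polynomial.natDegree_C, zero_add]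
    refine le_trans (Polynomial.natDegree_comp_le) ?_
    have haff : (Polynomial.C σ - Polynomial.C (2/(lamMax - lamMin)) *
        (Polynomial.X : ℝ[X])).natDegree ≤ 1 := by
      refine le_trans (Polynomial.natDegree_sub_le _ _) (max_le (by simp) ?_)
      refine le_trans (Polynomial.natDegree_mul_le) ?_
      simp [Polynomial.natDegree_X_le]
    have hT := chebT_natDegree_le k
    calc (Polynomial.Chebyshev.T ℝ (k:ℤ)).natDegree *
          (Polynomial.C σ - Polynomial.C (2/(lamMax - lamMin)) *
            (Polynomial.X : ℝ[X])).natDegree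
        ≤ k * 1 := Nat.mul_le_mul hT haff
      _ = k := by omega
  have hcoeff : (P - 1).coeff 0 = 0 := by
    rw [Polynomial.coeff_sub, Polynomial.coeff_zero_eq_eval_zero, hP0, Polynomial.coeff_one]
    simp
  obtain ⟨q, hq⟩ := (Polynomial.X_dvd_iff).mpr hcoeff
  have hPXq : P = Polynomial.X * q + 1 := by
    rw [← hq]; ring
  have hcomm : A * (Polynomial.aeval A q) = (Polynomial.aeval A q) * A := by
    have h1 : A * (Polynomial.aeval A q) = Polynomial.aeval A (Polynomial.X * q) := by
      rw [_root_.map_mul, Polynomial.aeval_X]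
    rw [h1, mul_comm Polynomial.X q, _root_.map_mul, Polynomial.aeval_X]
  have hzsplit : x 0 - xstar - (Polynomial.aeval A q).mulVec (r 0) =
      (Polynomial.aeval A P).mulVec (x 0 - xstar) := by
    rw [hPXq, _root_.map_add, _root_.map_mul, Polynomial.aeval_X, _root_.map_one, Matrix.add_mulVec,
      Matrix.one_mulVec, hcomm, ← Matrix.mulVec_mulVec, errA hxstar hr 0, Matrix.mulVec_neg]
    funext j; simp; ring
  have hzmem : (Polynomial.aeval A q).mulVec (r 0) ∈ Pspan p k := by
    by_cases hq0 : q = 0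
    · rw [hq0, map_zero, Matrix.zero_mulVec]
      exact Submodule.zero_mem _
    · have hqdeg : q.natDegree + 1 ≤ k := by
        have h2 : (P - 1).natDegree ≤ k :=
          le_trans (Polynomial.natDegree_sub_le _ _) (max_le hPdeg (by simp))
        rw [hq, Polynomial.natDegree_mul Polynomial.X_ne_zero hq0,
          Polynomial.natDegree_X] at h2
        omega
      rw [Polynomial.aeval_eq_sum_range, sum_smul_mulVec]
      refine Submodule.sum_mem _ fun m hm => Submodule.smul_mem _ _ ?_
      have hmk : m + 1 ≤ k := by have := Finset.mem_range.mp hm; omega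
      exact Pspan_mono hmk
        (krylov_mem hA hr hp0 halpha hx hbeta hp k hnz m (by omega))
  have h1 := cg_optimal hA hxstar hr hp0 halpha hx hbeta hp k hnz
    ((Polynomial.aeval A q).mulVec (r 0)) hzmem
  have h2 : ((Polynomial.aeval A P).mulVec (x 0 - xstar)) ⬝ᵥ
      (A.mulVec ((Polynomial.aeval A P).mulVec (x 0 - xstar))) =
      ∑ i, hA.1.eigenvalues i *
        (P.eval (hA.1.eigenvalues i) * cco hA.1 (x 0 - xstar) i)^2 := by
    rw [quad_eq_sum hA.1]
    exact Finset.sum_congr rfl fun i _ => by rw [cco_aeval]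
  have h3 : ∑ i, hA.1.eigenvalues i *
        (P.eval (hA.1.eigenvalues i) * cco hA.1 (x 0 - xstar) i)^2 ≤
      M^2 * ∑ i, hA.1.eigenvalues i * (cco hA.1 (x 0 - xstar) i)^2 := by
    rw [Finset.mul_sum]
    refine Finset.sum_le_sum fun i _ => ?_
    have habs : (P.eval (hA.1.eigenvalues i))^2 ≤ M^2 := by
      have h := hPbound i
      nlinarith [abs_nonneg (P.eval (hA.1.eigenvalues i)), sq_abs (P.eval (hA.1.eigenvalues i))]
    have hμ0 : 0 ≤ hA.1.eigenvalues i := le_of_lt (hevpos i)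
    calc hA.1.eigenvalues i * (P.eval (hA.1.eigenvalues i) * cco hA.1 (x 0 - xstar) i)^2
        = hA.1.eigenvalues i *
            ((P.eval (hA.1.eigenvalues i))^2 * (cco hA.1 (x 0 - xstar) i)^2) := by ring
      _ ≤ hA.1.eigenvalues i * (M^2 * (cco hA.1 (x 0 - xstar) i)^2) :=
          mul_le_mul_of_nonneg_left
            (mul_le_mul_of_nonneg_right habs (sq_nonneg _)) hμ0
      _ = M^2 * (hA.1.eigenvalues i * (cco hA.1 (x 0 - xstar) i)^2) := by ring
  have h4 : (x k - xstar) ⬝ᵥ A.mulVec (x k - xstar) ≤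
      M^2 * ((x 0 - xstar) ⬝ᵥ A.mulVec (x 0 - xstar)) := by
    calc (x k - xstar) ⬝ᵥ A.mulVec (x k - xstar)
        ≤ (x 0 - xstar - (Polynomial.aeval A q).mulVec (r 0)) ⬝ᵥ
            (A.mulVec (x 0 - xstar - (Polynomial.aeval A q).mulVec (r 0))) := h1
      _ = ((Polynomial.aeval A P).mulVec (x 0 - xstar)) ⬝ᵥ
            (A.mulVec ((Polynomial.aeval A P).mulVec (x 0 - xstar))) := by rw [hzsplit]
      _ = ∑ i, hA.1.eigenvalues i *
            (P.eval (hA.1.eigenvalues i) * cco hA.1 (x 0 - xstar) i)^2 := h2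
      _ ≤ M^2 * ∑ i, hA.1.eigenvalues i * (cco hA.1 (x 0 - xstar) i)^2 := h3
      _ = M^2 * ((x 0 - xstar) ⬝ᵥ A.mulVec (x 0 - xstar)) := by rw [← quad_eq_sum hA.1]
  calc Real.sqrt ((x k - xstar) ⬝ᵥ A.mulVec (x k - xstar))
      ≤ Real.sqrt (M^2 * ((x 0 - xstar) ⬝ᵥ A.mulVec (x 0 - xstar))) := Real.sqrt_le_sqrt h4
    _ = M * Real.sqrt ((x 0 - xstar) ⬝ᵥ A.mulVec (x 0 - xstar)) := by
        rw [Real.sqrt_mul (sq_nonneg M), Real.sqrt_sq hM0]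
    _ = 2 * ((Real.sqrt kappa - 1) / (Real.sqrt kappa + 1)) ^ k *
          Real.sqrt ((x 0 - xstar) ⬝ᵥ A.mulVec (x 0 - xstar)) := by rw [hMdef]
end

section
/- Let X ∈ ℝ^{u×n}, W ∈ ℝ^{u×n} with positive entries, and let M = I_n ⊗ XᵀX + λ I_{n²} and H = (I_n ⊗ X)ᵀ diag(vec(W)) (I_n ⊗ X) + λ I_{n²} with λ > 0. If all entries of W lie in [1, α] for some α ≥ 1, then the eigenvalues of M⁻¹H lie in [1, α]; in particular the condition number of M^{-1/2} H M^{-1/2} is at most α. -/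
open Matrix
open scoped Kronecker Matrix

private lemma quad_bound {N : Type*} [Fintype N] {M H : Matrix N N ℝ} {alpha : ℝ}
    (hMpd : M.PosDef) (h1 : (H - M).PosSemidef) (h2 : (alpha • M - H).PosSemidef)
    {w : N → ℝ} (hw : w ≠ 0) {μ : ℝ} (heq : w ⬝ᵥ H *ᵥ w = μ * (w ⬝ᵥ M *ᵥ w)) :
    1 ≤ μ ∧ μ ≤ alpha := by
  have hq : 0 < w ⬝ᵥ M *ᵥ w := by simpa using hMpd.dotProduct_mulVec_pos hw
  have hge : 0 ≤ w ⬝ᵥ H *ᵥ w - w ⬝ᵥ M *ᵥ w := by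
    have := h1.dotProduct_mulVec_nonneg w
    simpa [Matrix.sub_mulVec, dotProduct_sub] using this
  have hle : 0 ≤ alpha * (w ⬝ᵥ M *ᵥ w) - w ⬝ᵥ H *ᵥ w := by
    have := h2.dotProduct_mulVec_nonneg w
    simpa [Matrix.sub_mulVec, dotProduct_sub, Matrix.smul_mulVec,
      dotProduct_smul, smul_eq_mul] using this
  constructor
  · nlinarith
  · nlinarith

theorem stmt_17 {u n : Type*} [Fintype u] [Fintype n] [DecidableEq u] [DecidableEq n]
    (X W : Matrix u n ℝ) (lam alpha : ℝ) (hlam : 0 < lam) (halpha : 1 ≤ alpha)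
    (hW : ∀ a b, 1 ≤ W a b ∧ W a b ≤ alpha)
    (M H : Matrix (n × n) (n × n) ℝ)
    (hM : M = (1 : Matrix n n ℝ) ⊗ₖ (Xᵀ * X) + lam • (1 : Matrix (n × n) (n × n) ℝ))
    (hH : H = ((1 : Matrix n n ℝ) ⊗ₖ X)ᵀ * diagonal (_root_.vec W) * ((1 : Matrix n n ℝ) ⊗ₖ X) +
      lam • (1 : Matrix (n × n) (n × n) ℝ)) :
    (∀ μ : ℝ, Module.End.HasEigenvalue (Matrix.toLin' (M⁻¹ * H)) μ → 1 ≤ μ ∧ μ ≤ alpha) ∧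
    (∀ R : Matrix (n × n) (n × n) ℝ, R.PosDef → R * R = M⁻¹ →
      ∀ μ ν : ℝ, Module.End.HasEigenvalue (Matrix.toLin' (R * H * R)) μ →
        Module.End.HasEigenvalue (Matrix.toLin' (R * H * R)) ν → μ ≤ alpha * ν) := by
  classical
  set K : Matrix (n × u) (n × n) ℝ := (1 : Matrix n n ℝ) ⊗ₖ X with hKdef
  have hKc : Kᴴ = Kᵀ := by
    ext i j; simp [Matrix.conjTranspose_apply]
  have hKK : Kᵀ * K = (1 : Matrix n n ℝ) ⊗ₖ (Xᵀ * X) := by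
    rw [hKdef, ← kroneckerMap_transpose, ← mul_kronecker_mul, transpose_one, one_mul]
  have hsand : ∀ d : (n × u) → ℝ, (∀ p, 0 ≤ d p) → (Kᵀ * diagonal d * K).PosSemidef := by
    intro d hd
    have h := (Matrix.posSemidef_diagonal_iff.mpr fun p => by simpa using hd p
      : (diagonal d).PosSemidef).conjTranspose_mul_mul_same K
    rwa [hKc] at h
  have hMpd : M.PosDef := by
    have h1 : (Kᵀ * K).PosSemidef := by
      have := hsand (fun _ => 1) (fun _ => zero_le_one)
      simpa [Matrix.diagonal_one] using this
    have h2 : (lam • (1 : Matrix (n × n) (n × n) ℝ)).PosDef := by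
      rw [smul_one_eq_diagonal]
      exact Matrix.posDef_diagonal_iff.mpr fun _ => hlam
    rw [hM, ← hKK]
    exact Matrix.PosDef.posSemidef_add h1 h2
  have hdet : IsUnit M.det := hMpd.det_pos.ne'.isUnit
  -- H - M is PSD
  have hHM : (H - M).PosSemidef := by
    have heq : H - M = Kᵀ * diagonal (fun p => _root_.vec W p - 1) * K := by
      have : diagonal (fun p : n × u => _root_.vec W p - 1)
          = diagonal (_root_.vec W) - (1 : Matrix (n × u) (n × u) ℝ) := by
        rw [← Matrix.diagonal_one, ← Matrix.diagonal_sub]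
      rw [hH, hM, ← hKK, this, Matrix.mul_sub, Matrix.sub_mul, Matrix.mul_one]
      abel
    rw [heq]
    exact hsand _ fun p => by have := (hW p.2 p.1).1; simp only [_root_.vec]; linarith
  -- alpha • M - H is PSD
  have hAM : (alpha • M - H).PosSemidef := by
    have heq : alpha • M - H = Kᵀ * diagonal (fun p => alpha - _root_.vec W p) * K
        + ((alpha - 1) * lam) • (1 : Matrix (n × n) (n × n) ℝ) := by
      have hd : diagonal (fun p : n × u => alpha - _root_.vec W p)
          = alpha • (1 : Matrix (n × u) (n × u) ℝ) - diagonal (_root_.vec W) := by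
        rw [smul_one_eq_diagonal, ← Matrix.diagonal_sub]
      rw [hH, hM, ← hKK, hd, Matrix.mul_sub, Matrix.sub_mul,
        Matrix.mul_smul, Matrix.smul_mul, Matrix.mul_one]
      module
    rw [heq]
    refine Matrix.PosSemidef.add (hsand _ fun p => by
      have := (hW p.2 p.1).2; simp only [_root_.vec]; linarith) ?_
    rw [smul_one_eq_diagonal]
    exact Matrix.posSemidef_diagonal_iff.mpr fun _ => by simpa using mul_nonneg (by linarith : (0:ℝ) ≤ alpha - 1) hlam.le
  have hMMinv : M * M⁻¹ = 1 := Matrix.mul_nonsing_inv M hdet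
  constructor
  · intro μ hmu
    obtain ⟨v, hv⟩ := hmu.exists_hasEigenvector
    have happ : (M⁻¹ * H) *ᵥ v = μ • v := by
      have h0 := hv.apply_eq_smul
      rwa [Matrix.toLin'_apply] at h0
    have hHv : H *ᵥ v = μ • (M *ᵥ v) := by
      have h2 := congrArg (fun x => M *ᵥ x) happ
      simp only [Matrix.mulVec_mulVec, Matrix.mulVec_smul] at h2
      rwa [← Matrix.mul_assoc, hMMinv, Matrix.one_mul] at h2
    refine quad_bound hMpd hHM hAM hv.right ?_
    rw [hHv, dotProduct_smul, smul_eq_mul]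
  · intro R hR hRR μ ν hμ hν
    have hRdet : IsUnit R.det := hR.det_pos.ne'.isUnit
    have hRsym : Rᵀ = R := by
      ext i j
      have h2 := congrFun (congrFun hR.isHermitian i) j
      simpa [Matrix.conjTranspose_apply] using h2
    have hMeq : M = R⁻¹ * R⁻¹ := by
      have : M⁻¹⁻¹ = M := Matrix.nonsing_inv_nonsing_inv M hdet
      rw [← this, ← hRR, Matrix.mul_inv_rev]
    have key : ∀ μ : ℝ, Module.End.HasEigenvalue (Matrix.toLin' (R * H * R)) μ →
        1 ≤ μ ∧ μ ≤ alpha := by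
      intro μ hmu
      obtain ⟨v, hv⟩ := hmu.exists_hasEigenvector
      have happ : (R * H * R) *ᵥ v = μ • v := by
        have h0 := hv.apply_eq_smul
        rwa [Matrix.toLin'_apply] at h0
      set w : (n × n) → ℝ := R *ᵥ v with hw
      have hw0 : w ≠ 0 := by
        intro h
        exact hv.right (Matrix.mulVec_injective_iff_isUnit.mpr
          ((isUnit_iff_isUnit_det R).mpr hRdet) (by simpa [Matrix.mulVec_zero] using h))
      have hMw : M *ᵥ w = R⁻¹ *ᵥ v := by
        rw [hw, Matrix.mulVec_mulVec, hMeq, Matrix.mul_assoc,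
          Matrix.nonsing_inv_mul R hRdet, Matrix.mul_one]
      have hwMw : w ⬝ᵥ M *ᵥ w = v ⬝ᵥ v := by
        rw [hMw, hw, ← Matrix.vecMul_transpose R v, Matrix.dotProduct_mulVec,
          Matrix.vecMul_vecMul, hRsym, Matrix.mul_nonsing_inv R hRdet, Matrix.vecMul_one]
      have hwHw : w ⬝ᵥ H *ᵥ w = μ * (v ⬝ᵥ v) := by
        have h1 : v ⬝ᵥ (R * H * R) *ᵥ v = μ * (v ⬝ᵥ v) := by
          rw [happ, dotProduct_smul, smul_eq_mul]
        calc w ⬝ᵥ H *ᵥ w = v ⬝ᵥ (R * H * R) *ᵥ v := by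
              rw [hw, Matrix.mulVec_mulVec, ← Matrix.vecMul_transpose R v,
                Matrix.dotProduct_mulVec, Matrix.vecMul_vecMul, hRsym,
                ← Matrix.dotProduct_mulVec, ← Matrix.mul_assoc]
          _ = μ * (v ⬝ᵥ v) := h1
      exact quad_bound hMpd hHM hAM hw0 (by rw [hwHw, hwMw])
    obtain ⟨_, hμ2⟩ := key μ hμ
    obtain ⟨hν1, _⟩ := key ν hν
    nlinarith
end
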